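/- For positive integers m, n, real k_f, and τ = u+iv ∈ ℍ with q = e^{2πiτ}: applying the operator h ↦ i v^{κ} · conjugate((∂/∂u + i ∂/∂v) h) to h(τ) = Γ(1-k_f, 4πmv) q^{n-m} yields -v^{k_g} (4πm)^{1-k_f} e^{2πim τ} e^{-2πin \bar{τ}}, where κ = k_f + k_g. -/

import Mathlib

open Real

/-- The upper incomplete Gamma function `Γ(s,x) = ∫_x^∞ t^{s-1} e^{-t} dt`. -/
noncomputable def uGamma (s x : ℝ) : ℝ := ∫ t in Set.Ioi x, t ^ (s - 1) * Real.exp (-t)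

open MeasureTheory Set Filter in
lemma uGamma_integrableOn (s : ℝ) {a : ℝ} (ha : 0 < a) :
    IntegrableOn (fun t : ℝ => t ^ (s - 1) * Real.exp (-t)) (Set.Ioi a) := by
  refine integrable_of_isBigO_exp_neg one_half_pos ?_ ?_
  · refine ContinuousOn.mul ?_ (Real.continuous_exp.comp continuous_neg).continuousOn
    exact continuousOn_id.rpow_const fun x hx => Or.inl (ha.trans_le hx).ne'
  · simpa [mul_comm] using (Real.Gamma_integrand_isLittleO (s - 1)).isBigO

open MeasureTheory Set Filter intervalIntegral in
lemma hasDerivAt_uGamma (s : ℝ) {x : ℝ} (hx : 0 < x) :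
    HasDerivAt (uGamma s) (-(x ^ (s - 1) * Real.exp (-x))) x := by
  set f : ℝ → ℝ := fun t => t ^ (s - 1) * Real.exp (-t) with hf
  set a : ℝ := x / 2 with ha
  have hax : a < x := by simp [ha]; linarith
  have ha0 : 0 < a := by positivity
  have hint : IntegrableOn f (Ioi a) := uGamma_integrableOn s ha0
  have hcont : ContinuousAt f x := by
    refine ContinuousAt.mul ?_ (Real.continuous_exp.comp continuous_neg).continuousAt
    exact Real.continuousAt_rpow_const x _ (Or.inl hx.ne')
  have key : ∀ y ∈ Ioi a, uGamma s y = uGamma s a - ∫ t in a..y, f t := by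
    intro y hy
    have hy' : a ≤ y := le_of_lt hy
    have hsplit : (Ioc a y ∪ Ioi y) = Ioi a := Ioc_union_Ioi_eq_Ioi hy'
    have h1 : IntegrableOn f (Ioc a y) := hint.mono_set (by
      rw [← hsplit]; exact subset_union_left)
    have h2 : IntegrableOn f (Ioi y) := hint.mono_set (by
      rw [← hsplit]; exact subset_union_right)
    have := MeasureTheory.setIntegral_union (Ioc_disjoint_Ioi le_rfl) measurableSet_Ioi h1 h2
    rw [hsplit] at this
    rw [intervalIntegral.integral_of_le hy']
    unfold uGamma
    rw [this]; ring
  have hmem : Ioi a ∈ nhds x := Ioi_mem_nhds hax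
  have heq : uGamma s =ᶠ[nhds x] fun y => uGamma s a - ∫ t in a..y, f t :=
    eventually_of_mem hmem key
  have hD : HasDerivAt (fun y => uGamma s a - ∫ t in a..y, f t) (-(f x)) x := by
    have hii : IntervalIntegrable f volume a x := by
      rw [intervalIntegrable_iff_integrableOn_Ioc_of_le hax.le]
      exact hint.mono_set Ioc_subset_Ioi_self
    have := intervalIntegral.integral_hasDerivAt_right hii
      ⟨Ioi a, hmem, (hint.mono_set subset_rfl).1⟩ hcont
    have h := (hasDerivAt_const x (uGamma s a)).sub this
    rw [zero_sub] at h
    exact h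
  exact hD.congr_of_eventuallyEq heq

/-- For positive integers `m, n`, reals `k_f, k_g` with `κ = k_f + k_g`, and `τ = u + iv ∈ ℍ`:
applying `h ↦ i v^κ conj((∂/∂u + i ∂/∂v) h)` to `h = Γ(1-k_f, 4πmv) q^{n-m}` yields
`-v^{k_g} (4πm)^{1-k_f} e^{2πimτ} e^{-2πinτ̄}`. -/
theorem xi_of_incomplete_gamma_term (m n : ℕ) (hm : 0 < m) (hn : 0 < n)
    (kf kg : ℝ) (u v : ℝ) (hv : 0 < v) :
    Complex.I * ((v ^ (kf + kg) : ℝ) : ℂ) * (starRingEnd ℂ)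
        (deriv (fun u' : ℝ => ((uGamma (1 - kf) (4 * π * m * v) : ℝ) : ℂ) *
            Complex.exp (2 * (π : ℂ) * Complex.I * ((n : ℂ) - m) * ((u' : ℂ) + Complex.I * v))) u
          + Complex.I * deriv (fun v' : ℝ => ((uGamma (1 - kf) (4 * π * m * v') : ℝ) : ℂ) *
            Complex.exp (2 * (π : ℂ) * Complex.I * ((n : ℂ) - m) * ((u : ℂ) + Complex.I * v'))) v)
      = -((v ^ kg : ℝ) : ℂ) * (((4 * π * m) ^ (1 - kf) : ℝ) : ℂ) *
          Complex.exp (2 * (π : ℂ) * Complex.I * (m : ℂ) * ((u : ℂ) + Complex.I * v)) *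
          Complex.exp (-(2 * (π : ℂ) * Complex.I * (n : ℂ) * ((u : ℂ) - Complex.I * v))) := by
  have hm' : (0:ℝ) < 4 * π * m := by positivity
  have hx : (0:ℝ) < 4 * π * m * v := by positivity
  set c : ℂ := 2 * (π : ℂ) * Complex.I * ((n : ℂ) - m) with hc
  set A : ℝ := uGamma (1 - kf) (4 * π * m * v) with hA
  set F : ℝ := (4 * π * m * v) ^ ((1 - kf) - 1) * Real.exp (-(4 * π * m * v)) with hF
  -- derivative in u
  have hdu : deriv (fun u' : ℝ => (A : ℂ) *
      Complex.exp (c * ((u' : ℂ) + Complex.I * v))) u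
      = (A : ℂ) * (Complex.exp (c * ((u : ℂ) + Complex.I * v)) * c) := by
    have h1 : HasDerivAt (fun u' : ℝ => ((u' : ℂ) + Complex.I * v)) 1 u := by
      simpa using ((hasDerivAt_id u).ofReal_comp.add_const (Complex.I * v))
    have h2 := ((h1.const_mul c).cexp).const_mul (A : ℂ)
    simpa [mul_one, mul_comm, mul_left_comm, mul_assoc] using h2.deriv
  -- derivative in v
  have hgamma : HasDerivAt (fun v' : ℝ => uGamma (1 - kf) (4 * π * m * v'))
      (-(F * (4 * π * m))) v := by
    have h1 : HasDerivAt (fun v' : ℝ => 4 * π * m * v') (4 * π * m) v := by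
      simpa using (hasDerivAt_id v).const_mul (4 * π * (m : ℝ))
    have h2 : HasDerivAt (fun v' : ℝ => uGamma (1 - kf) (4 * π * m * v'))
        (-((4 * π * m * v) ^ ((1 - kf) - 1) * Real.exp (-(4 * π * m * v))) * (4 * π * m)) v :=
      (hasDerivAt_uGamma (1 - kf) hx).comp v h1
    convert h2 using 1
    rw [hF]; ring
  have hdv : deriv (fun v' : ℝ => ((uGamma (1 - kf) (4 * π * m * v') : ℝ) : ℂ) *
      Complex.exp (c * ((u : ℂ) + Complex.I * v')) ) v
      = ((-(F * (4 * π * m)) : ℝ) : ℂ) * Complex.exp (c * ((u : ℂ) + Complex.I * v))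
        + (A : ℂ) * (Complex.exp (c * ((u : ℂ) + Complex.I * v)) * (c * Complex.I)) := by
    have h1 : HasDerivAt (fun v' : ℝ => ((u : ℂ) + Complex.I * v')) Complex.I v := by
      simpa using (((hasDerivAt_id v).ofReal_comp.const_mul Complex.I).const_add (u : ℂ))
    have h2 := (h1.const_mul c).cexp
    have h3 := hgamma.ofReal_comp.mul h2
    exact h3.deriv
  rw [hdu, hdv]
  -- simplify the bracket
  have hE : (A : ℂ) * (Complex.exp (c * ((u : ℂ) + Complex.I * v)) * c)
      + Complex.I * (((-(F * (4 * π * m)) : ℝ) : ℂ) * Complex.exp (c * ((u : ℂ) + Complex.I * v))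
        + (A : ℂ) * (Complex.exp (c * ((u : ℂ) + Complex.I * v)) * (c * Complex.I)))
      = Complex.I * ((-(F * (4 * π * m)) : ℝ) : ℂ)
          * Complex.exp (c * ((u : ℂ) + Complex.I * v)) := by
    linear_combination ((A : ℂ) * Complex.exp (c * ((u : ℂ) + Complex.I * v)) * c) * Complex.I_sq
  rw [hE]
  -- take conjugate
  rw [map_mul, map_mul, Complex.conj_I, ← Complex.exp_conj]
  have hconj : (starRingEnd ℂ) (c * ((u : ℂ) + Complex.I * v))
      = -(2 * (π : ℂ) * Complex.I * ((n : ℂ) - m)) * ((u : ℂ) - Complex.I * v) := by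
    simp only [hc, map_mul, map_sub, map_add, Complex.conj_I, Complex.conj_ofReal,
      Complex.conj_natCast, map_ofNat]
    ring
  rw [hconj, Complex.conj_ofReal]
  set E' : ℂ := Complex.exp (-(2 * (π : ℂ) * Complex.I * ((n : ℂ) - m))
    * ((u : ℂ) - Complex.I * v)) with hE'
  -- real rpow algebra
  have hrpow : v ^ (kf + kg) * (F * (4 * π * m))
      = v ^ kg * (4 * π * m) ^ (1 - kf) * Real.exp (-(4 * π * m * v)) := by
    rw [hF, Real.mul_rpow hm'.le hv.le,
      show ((1 - kf) - 1 : ℝ) = -kf by ring,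
      show (1 - kf : ℝ) = 1 + (-kf) by ring, Real.rpow_add hm', Real.rpow_one,
      show (kf + kg : ℝ) = kg + kf by ring, Real.rpow_add hv]
    have hvv : v ^ kf * v ^ (-kf) = 1 := by
      rw [← Real.rpow_add hv]; simp
    linear_combination (v ^ kg * (4 * π * (m:ℝ)) ^ (-kf)
      * Real.exp (-(4 * π * m * v)) * (4 * π * (m:ℝ))) * hvv
  -- exponential identity
  have hexp : E' * Complex.exp (((-(4 * π * m * v) : ℝ)) : ℂ)
      = Complex.exp (2 * (π : ℂ) * Complex.I * (m : ℂ) * ((u : ℂ) + Complex.I * v)) *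
        Complex.exp (-(2 * (π : ℂ) * Complex.I * (n : ℂ) * ((u : ℂ) - Complex.I * v))) := by
    rw [hE', ← Complex.exp_add, ← Complex.exp_add]
    congr 1
    push_cast
    linear_combination (-(4 * (π : ℂ) * (m : ℂ) * (v : ℂ))) * Complex.I_sq
  have key : ∀ a b e : ℂ, Complex.I * a * (-Complex.I * b * e) = a * b * e := by
    intro a b e
    linear_combination (-(a * b * e)) * Complex.I_sq
  rw [key]
  calc ((v ^ (kf + kg) : ℝ) : ℂ) * ((-(F * (4 * π * m)) : ℝ) : ℂ) * E'
      = -(((v ^ (kf + kg) * (F * (4 * π * m)) : ℝ) : ℂ)) * E' := by push_cast; ring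
    _ = -(((v ^ kg * (4 * π * m) ^ (1 - kf) * Real.exp (-(4 * π * m * v)) : ℝ) : ℂ)) * E' := by
        rw [hrpow]
    _ = -((v ^ kg : ℝ) : ℂ) * (((4 * π * m) ^ (1 - kf) : ℝ) : ℂ)
          * (E' * Complex.exp (((-(4 * π * m * v) : ℝ)) : ℂ)) := by
        rw [Complex.ofReal_mul, Complex.ofReal_mul, Complex.ofReal_exp]; ring
    _ = -((v ^ kg : ℝ) : ℂ) * (((4 * π * m) ^ (1 - kf) : ℝ) : ℂ) *
          Complex.exp (2 * (π : ℂ) * Complex.I * (m : ℂ) * ((u : ℂ) + Complex.I * v)) *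
          Complex.exp (-(2 * (π : ℂ) * Complex.I * (n : ℂ) * ((u : ℂ) - Complex.I * v))) := by
        rw [hexp]; ring
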